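/- With $\hat{X}$, $H$, $\Gamma$, and $T = [I + (H\hat{X})^T \Gamma^{-1}(H\hat{X})]^{-1}$ as in the ETKF, and $X = \hat{X} T^{1/2}$ where $T^{1/2}$ is the symmetric positive-definite square root of $T$, the transformed perturbation matrix satisfies $X X^T = \hat{X} T \hat{X}^T = (I - KH)\hat{C}$, where $\hat{C} = \hat{X}\hat{X}^T$ and $K = \hat{C}H^T(H\hat{C}H^T + \Gamma)^{-1}$. -/

import Mathlib

open Matrix

section
open scoped ComplexOrder

/-- The positive semidefinite square root, as defined in Mathlib (December 2024), since removed. -/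
noncomputable def Matrix.PosSemidef.sqrt {n : Type*} [Fintype n] [DecidableEq n] {𝕜 : Type*}
    [RCLike 𝕜] {A : Matrix n n 𝕜} (hA : A.PosSemidef) : Matrix n n 𝕜 :=
  hA.1.eigenvectorUnitary.1 * diagonal ((↑) ∘ (√·) ∘ hA.1.eigenvalues) *
  (star hA.1.eigenvectorUnitary : Matrix n n 𝕜)

end

lemma posDef_add_posSemidef {n : ℕ} {A B : Matrix (Fin n) (Fin n) ℝ}
    (hA : A.PosDef) (hB : B.PosSemidef) : (A + B).PosDef :=
  hA.add_posSemidef hB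

theorem etkf_consistency {M N K : ℕ}
    (Xhat : Matrix (Fin N) (Fin K) ℝ)
    (H : Matrix (Fin M) (Fin N) ℝ)
    (Γ : Matrix (Fin M) (Fin M) ℝ) (hΓ : Γ.PosDef)
    (T : Matrix (Fin K) (Fin K) ℝ)
    (hT : T = (1 + (H * Xhat)ᵀ * Γ⁻¹ * (H * Xhat))⁻¹)
    (hTpsd : T.PosSemidef)
    (X : Matrix (Fin N) (Fin K) ℝ) (hX : X = Xhat * hTpsd.sqrt)
    (Chat : Matrix (Fin N) (Fin N) ℝ) (hC : Chat = Xhat * Xhatᵀ)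
    (Kg : Matrix (Fin N) (Fin M) ℝ)
    (hK : Kg = Chat * Hᵀ * (H * Chat * Hᵀ + Γ)⁻¹) :
    X * Xᵀ = Xhat * T * Xhatᵀ ∧ Xhat * T * Xhatᵀ = (1 - Kg * H) * Chat := by
  set S := H * Xhat with hS
  set A := 1 + Sᵀ * Γ⁻¹ * S with hA
  -- A is positive definite
  have hAposd : A.PosDef := by
    apply posDef_add_posSemidef Matrix.PosDef.one
    have := (hΓ.inv).posSemidef.conjTranspose_mul_mul_same S
    simpa [conjTranspose_eq_transpose_of_trivial] using this
  have hAinv : A * A⁻¹ = 1 :=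
    A.mul_nonsing_inv ((Matrix.isUnit_iff_isUnit_det A).mp hAposd.isUnit)
  -- G = H Chat Hᵀ + Γ is positive definite
  set G := H * Chat * Hᵀ + Γ with hG
  have hGposd : G.PosDef := by
    rw [hG, add_comm]
    apply posDef_add_posSemidef hΓ
    have h1 : H * Chat * Hᵀ = S * Sᵀ := by
      rw [hC, hS, Matrix.transpose_mul]
      simp only [Matrix.mul_assoc]
    rw [h1]
    have := posSemidef_self_mul_conjTranspose S
    simpa [conjTranspose_eq_transpose_of_trivial] using this
  have hGdet : IsUnit G.det := (Matrix.isUnit_iff_isUnit_det G).mp hGposd.isUnit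
  have hGinv : G⁻¹ * G = 1 := G.nonsing_inv_mul hGdet
  have hΓdet : IsUnit Γ.det := (Matrix.isUnit_iff_isUnit_det Γ).mp hΓ.isUnit
  have hΓinv : Γ * Γ⁻¹ = 1 := Γ.mul_nonsing_inv hΓdet
  -- Key identity: (1 - Kg * H) * Xhat * A = Xhat
  have key : (1 - Kg * H) * (Xhat * A) = Xhat := by
    have hXA : Xhat * A = Xhat + Chat * Hᵀ * (Γ⁻¹ * S) := by
      rw [hA, hC, hS]
      simp only [Matrix.mul_add, Matrix.mul_one, Matrix.transpose_mul, Matrix.mul_assoc]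
    have hSA : S * A = G * (Γ⁻¹ * S) := by
      have hS1 : S = Γ * (Γ⁻¹ * S) := by rw [← Matrix.mul_assoc, hΓinv, Matrix.one_mul]
      have h1 : H * Chat * Hᵀ = S * Sᵀ := by
        rw [hC, hS, Matrix.transpose_mul]
        simp only [Matrix.mul_assoc]
      calc S * A = S + S * Sᵀ * (Γ⁻¹ * S) := by
            rw [hA]
            simp only [Matrix.mul_add, Matrix.mul_one, Matrix.mul_assoc]
        _ = Γ * (Γ⁻¹ * S) + H * Chat * Hᵀ * (Γ⁻¹ * S) := by rw [← hS1, h1]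
        _ = G * (Γ⁻¹ * S) := by rw [hG, Matrix.add_mul, add_comm]
    have hHXA : H * (Xhat * A) = S * A := by
      rw [hS, Matrix.mul_assoc]
    calc (1 - Kg * H) * (Xhat * A)
        = Xhat * A - Kg * (H * (Xhat * A)) := by
          rw [Matrix.sub_mul, Matrix.one_mul, Matrix.mul_assoc]
      _ = Xhat + Chat * Hᵀ * (Γ⁻¹ * S)
          - Chat * Hᵀ * (G⁻¹ * (G * (Γ⁻¹ * S))) := by
            rw [hHXA, hSA, hXA, hK, Matrix.mul_assoc (Chat * Hᵀ) G⁻¹]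
      _ = Xhat := by
            rw [← Matrix.mul_assoc G⁻¹ G, hGinv, Matrix.one_mul, add_sub_cancel_right]
  have hAT : A * T = 1 := by rw [hT]; exact hAinv
  constructor
  · -- X * Xᵀ = Xhat * T * Xhatᵀ
    have hsym : hTpsd.sqrtᵀ = hTpsd.sqrt := by
      rw [← conjTranspose_eq_transpose_of_trivial]
      simp [Matrix.PosSemidef.sqrt, Matrix.mul_assoc, star_eq_conjTranspose,
        conjTranspose_eq_transpose_of_trivial]
    have hsq : hTpsd.sqrt * hTpsd.sqrt = T := by
      conv_rhs => rw [hTpsd.1.spectral_theorem, Unitary.conjStarAlgAut_apply]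
      simp only [Matrix.PosSemidef.sqrt, Matrix.mul_assoc]
      rw [← Matrix.mul_assoc (star _ : Matrix _ _ ℝ) (hTpsd.1.eigenvectorUnitary.1),
        Unitary.coe_star_mul_self, Matrix.one_mul,
        ← Matrix.mul_assoc (diagonal _), diagonal_mul_diagonal]
      congr 3
      funext i
      simp [Real.mul_self_sqrt (hTpsd.eigenvalues_nonneg i)]
    rw [hX, Matrix.transpose_mul, hsym, ← Matrix.mul_assoc,
      Matrix.mul_assoc Xhat, hsq]
  · -- Xhat * T * Xhatᵀ = (1 - Kg * H) * Chat
    calc Xhat * T * Xhatᵀ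
        = (1 - Kg * H) * (Xhat * A) * T * Xhatᵀ := by rw [key]
      _ = (1 - Kg * H) * (Xhat * (A * T)) * Xhatᵀ := by
          simp only [Matrix.mul_assoc]
      _ = (1 - Kg * H) * Chat := by
          rw [hAT, Matrix.mul_one, hC, Matrix.mul_assoc]
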